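/- arXiv:2206.10086 — 2 statements merged into one kernel-verified Lean document; each statement's English description precedes it below -/
import Mathlib

section
/- Let P ∈ ℚ[T] be an irreducible polynomial with P(0) ≠ 0, and let Γ be the multiplicative subgroup of ℂˣ generated by the complex roots of P. If Γ is infinite cyclic (isomorphic to ℤ as an abstract group), then the degree of P is at most 2. -/
open Polynomial

/-- **Irreducible rational polynomials whose roots generate an infinite cyclic group have
degree at most 2.**

Let `P ∈ ℚ[T]` be irreducible with nonzero constant term, and let `Γ ≤ ℂˣ` be the
multiplicative subgroup generated by the complex roots of `P`.  If `Γ` is infinite cyclic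
(isomorphic to `ℤ`), then `deg P ≤ 2`. -/
theorem natDegree_le_two_of_roots_generate_infinite_cyclic
    (P : Polynomial ℚ) (hP : Irreducible P) (h0 : P.coeff 0 ≠ 0)
    (hcyc : Nonempty
      ((Subgroup.closure {u : ℂˣ | Polynomial.aeval (u : ℂ) P = 0}) ≃* Multiplicative ℤ)) :
    P.natDegree ≤ 2 := by
  classical
  set L := P.SplittingField with hL
  have hPne : P ≠ 0 := hP.ne_zero
  set S : Set Lˣ := {u : Lˣ | aeval (u : L) P = 0} with hSdef
  set Γ : Subgroup Lˣ := Subgroup.closure S with hΓdef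
  -- embedding of the splitting field into ℂ
  let emb : L →ₐ[ℚ] ℂ := SplittingField.lift P (IsAlgClosed.splits (P.map (algebraMap ℚ ℂ)))
  let f : Lˣ →* ℂˣ := Units.map (emb : L →* ℂ)
  have hfinj : Function.Injective f := by
    intro u v huv
    ext
    exact emb.injective (congrArg (Units.val) huv)
  have himg : f '' S = {u : ℂˣ | Polynomial.aeval (u : ℂ) P = 0} := by
    ext v
    constructor
    · rintro ⟨u, hu, rfl⟩
      show aeval ((f u : ℂˣ) : ℂ) P = 0
      have : ((f u : ℂˣ) : ℂ) = emb u := rfl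
      rw [this, aeval_algHom_apply]
      simp [hu.out]
    · intro hv
      have hv' : ((v : ℂˣ) : ℂ) ∈ P.rootSet ℂ := by
        rw [mem_rootSet]
        exact ⟨hPne, hv⟩
      have himgroot : emb '' P.rootSet L = P.rootSet ℂ :=
        Polynomial.Splits.image_rootSet (SplittingField.splits P) emb
      rw [← himgroot] at hv'
      obtain ⟨β, hβ, hβv⟩ := hv'
      have hβ0 : β ≠ 0 := by
        intro h
        apply v.ne_zero
        rw [← hβv, h, map_zero]
      refine ⟨Units.mk0 β hβ0, ?_, ?_⟩
      · show aeval ((Units.mk0 β hβ0 : Lˣ) : L) P = 0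
        simpa using (mem_rootSet.mp hβ).2
      · ext
        exact hβv
  have hmapeq : Γ.map f = Subgroup.closure {u : ℂˣ | Polynomial.aeval (u : ℂ) P = 0} := by
    rw [hΓdef, MonoidHom.map_closure, himg]
  -- Γ ≃* ℤ
  let eL : Γ ≃* Multiplicative ℤ :=
    ((Subgroup.equivMapOfInjective Γ f hfinj).trans (MulEquiv.subgroupCongr hmapeq)).trans
      hcyc.some
  -- Galois action preserves Γ
  have hrootmem : ∀ (σ : L ≃ₐ[ℚ] L), ∀ u ∈ S, Units.map (σ : L →* L) u ∈ S := by
    intro σ u hu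
    show aeval ((Units.map (σ : L →* L) u : Lˣ) : L) P = 0
    have h1 : ((Units.map (σ : L →* L) u : Lˣ) : L) = σ (u : L) := rfl
    have h2 := aeval_algHom_apply (σ : L →ₐ[ℚ] L) (u : L) P
    rw [h1]
    show aeval ((σ : L →ₐ[ℚ] L) (u : L)) P = 0
    rw [h2, hu.out, map_zero]
  have hmem : ∀ (σ : L ≃ₐ[ℚ] L), ∀ u ∈ Γ, Units.map (σ : L →* L) u ∈ Γ := by
    intro σ u hu
    refine Subgroup.closure_induction (fun x hx => Subgroup.subset_closure (hrootmem σ x hx))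
      (by rw [map_one]; exact one_mem Γ) (fun x y _ _ hx hy => by rw [map_mul]; exact mul_mem hx hy)
      (fun x _ hx => by rw [map_inv]; exact inv_mem hx) hu
  -- fixing all roots means identity
  have hfix : ∀ (σ : L ≃ₐ[ℚ] L), (∀ u ∈ S, Units.map (σ : L →* L) u = u) → σ = 1 := by
    intro σ hσ
    have : (σ : P.Gal) = 1 := by
      apply Polynomial.Gal.ext
      intro x hx
      have hx0 : x ≠ 0 := by
        intro h
        have hz := (mem_rootSet.mp hx).2
        rw [h, aeval_def, eval₂_at_zero] at hz
        exact h0 ((algebraMap ℚ L).injective (by simpa using hz))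
      have hxS : Units.mk0 x hx0 ∈ S := by
        show aeval ((Units.mk0 x hx0 : Lˣ) : L) P = 0
        exact (mem_rootSet.mp hx).2
      have := congrArg Units.val (hσ _ hxS)
      exact this
    exact this
  -- generator of Γ
  set gG : Γ := eL.symm (Multiplicative.ofAdd 1) with hgGdef
  set g : Lˣ := (gG : Lˣ) with hgdef
  have hgΓ : g ∈ Γ := gG.2
  have heLg : eL gG = Multiplicative.ofAdd 1 := eL.apply_symm_apply _
  have hpow : ∀ u (hu : u ∈ Γ), u = g ^ (Multiplicative.toAdd (eL ⟨u, hu⟩)) := by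
    intro u hu
    have h1 : (⟨u, hu⟩ : Γ) = gG ^ (Multiplicative.toAdd (eL ⟨u, hu⟩)) := by
      apply eL.injective
      rw [map_zpow, heLg]
      apply Multiplicative.toAdd.injective
      simp
    have := congrArg (Subtype.val) h1
    simpa using this
  have hgpow_inj : ∀ k : ℤ, g ^ k = g → k = 1 := by
    intro k hk
    have h1 : gG ^ k = gG := Subtype.ext (by simpa using hk)
    have h2 := congrArg eL h1
    rw [map_zpow, heLg] at h2
    have h3 := congrArg Multiplicative.toAdd h2
    simpa using h3
  have hkσ : ∀ σ : L ≃ₐ[ℚ] L, ∃ k : ℤ, Units.map (σ : L →* L) g = g ^ k := fun σ =>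
    ⟨_, hpow _ (hmem σ g hgΓ)⟩
  have hunit : ∀ σ : L ≃ₐ[ℚ] L, ∀ k : ℤ, Units.map (σ : L →* L) g = g ^ k →
      k = 1 ∨ k = -1 := by
    intro σ k hk
    obtain ⟨j, hj⟩ := hkσ σ.symm
    have hcomp : Units.map (σ : L →* L) (Units.map (σ.symm : L →* L) g) = g := by
      ext
      simp
    rw [hj, map_zpow, hk, ← zpow_mul] at hcomp
    exact Int.eq_one_or_neg_one_of_mul_eq_one (hgpow_inj _ hcomp)
  have hinv : ∀ σ : L ≃ₐ[ℚ] L, σ ≠ 1 → ∀ u ∈ Γ, Units.map (σ : L →* L) u = u⁻¹ := by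
    intro σ hσ u hu
    obtain ⟨k, hk⟩ := hkσ σ
    rcases hunit σ k hk with h1 | h1
    · exfalso
      apply hσ
      apply hfix
      intro v hv
      have hvΓ : v ∈ Γ := Subgroup.subset_closure hv
      have hv' := hpow v hvΓ
      rw [hv', map_zpow, hk, h1, zpow_one]
    · have hu' := hpow u hu
      rw [hu', map_zpow, hk, h1]
      group
  have hmul : ∀ σ τ : L ≃ₐ[ℚ] L, σ ≠ 1 → τ ≠ 1 → σ * τ = 1 := by
    intro σ τ hσ hτ
    apply hfix
    intro u hu
    have huΓ : u ∈ Γ := Subgroup.subset_closure hu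
    have h1 : Units.map (τ : L →* L) u = u⁻¹ := hinv τ hτ u huΓ
    have h2 : Units.map (σ : L →* L) u⁻¹ = u := by
      rw [hinv σ hσ u⁻¹ (inv_mem huΓ), inv_inv]
    ext
    show (σ * τ : L ≃ₐ[ℚ] L) (u : L) = (u : L)
    rw [AlgEquiv.mul_apply]
    have e1 : τ (u : L) = ((u⁻¹ : Lˣ) : L) := congrArg Units.val h1
    have e2 : σ ((u⁻¹ : Lˣ) : L) = (u : L) := congrArg Units.val h2
    rw [e1, e2]
  have huniq : ∀ σ τ : L ≃ₐ[ℚ] L, σ ≠ 1 → τ ≠ 1 → σ = τ := by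
    intro σ τ hσ hτ
    have h1 := hmul σ σ hσ hσ
    have h2 := hmul σ τ hσ hτ
    exact mul_left_cancel (h1.trans h2.symm)
  have hcard : Fintype.card (L ≃ₐ[ℚ] L) ≤ 2 := by
    by_cases hex : ∃ σ : L ≃ₐ[ℚ] L, σ ≠ 1
    · obtain ⟨σ₀, h₀⟩ := hex
      have hsub : (Finset.univ : Finset (L ≃ₐ[ℚ] L)) ⊆ {1, σ₀} := by
        intro τ _
        by_cases hτ : τ = 1
        · simp [hτ]
        · simp [huniq τ σ₀ hτ h₀]
      calc Fintype.card (L ≃ₐ[ℚ] L) = Finset.univ.card := rfl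
        _ ≤ ({1, σ₀} : Finset (L ≃ₐ[ℚ] L)).card := Finset.card_le_card hsub
        _ ≤ 2 := by
            apply le_trans (Finset.card_insert_le _ _)
            simp
    · push_neg at hex
      have : Fintype.card (L ≃ₐ[ℚ] L) ≤ 1 :=
        Fintype.card_le_one_iff.mpr fun a b => (hex a).trans (hex b).symm
      omega
  have hfr : Module.finrank ℚ L ≤ 2 := by
    have hc := Polynomial.Gal.card_of_separable hP.separable
    exact le_trans (le_of_eq hc.symm) (le_trans (le_of_eq (Nat.card_eq_fintype_card (α := L ≃ₐ[ℚ] L))) hcard)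
  -- finish: degree of P bounded by finrank
  haveI : FiniteDimensional ℚ L := inferInstanceAs (FiniteDimensional ℚ P.SplittingField)
  have hdeg : P.degree ≠ 0 := fun h => hP.not_isUnit (isUnit_iff_degree_eq_zero.mpr h)
  obtain ⟨α, hα⟩ :=
    Polynomial.Splits.exists_eval_eq_zero (SplittingField.splits P) (by rwa [degree_map])
  have hroot : aeval α P = 0 := by rwa [aeval_def, ← eval_map]
  have hmin : minpoly ℚ α = P * C (P.leadingCoeff)⁻¹ := (minpoly.eq_of_irreducible hP hroot).symm
  have h1 : (minpoly ℚ α).natDegree = P.natDegree := by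
    rw [hmin, natDegree_mul_C (inv_ne_zero (leadingCoeff_ne_zero.mpr hPne))]
  have h2 : (minpoly ℚ α).natDegree ≤ Module.finrank ℚ L := minpoly.natDegree_le α
  omega
end

section
/- Let K be a field, V a finite-dimensional K-vector space, and B a nondegenerate symmetric bilinear form on V. Let g : V → V be an isometry of (V, B), i.e. a linear automorphism with B(g v, g w) = B(v, w) for all v, w ∈ V. Suppose there are α₁, …, α_d ∈ Kˣ such that the 2d elements α₁, …, α_d, α₁⁻¹, …, α_d⁻¹ are pairwise distinct and V is the internal direct sum of the eigenspaces E(α₁), …, E(α_d), E(α₁⁻¹), …, E(α_d⁻¹) of g, where E(λ) := ker(g − λ·id). Then the centralizer of g in the orthogonal group O(V, B) := { h ∈ GL(V) : B(h v, h w) = B(v, w) for all v, w } is isomorphic, as a group, to the direct product ∏_{i=1}^{d} GL(E(αᵢ)). -/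
/-- The subgroup of the group of linear automorphisms of `V` consisting of the isometries
of the bilinear form `B` that commute with `g`, i.e. the centralizer of `g` in the
orthogonal group `O(V, B)`. -/
def orthogonalCentralizer {K V : Type*} [Field K] [AddCommGroup V] [Module K V]
    (B : V →ₗ[K] V →ₗ[K] K) (g : V ≃ₗ[K] V) : Subgroup (V ≃ₗ[K] V) where
  carrier := {h | (∀ v w : V, B (h v) (h w) = B v w) ∧ Commute h g}
  one_mem' := ⟨fun v w => rfl, Commute.one_left g⟩
  mul_mem' := by
    rintro a b ⟨ha, ha'⟩ ⟨hb, hb'⟩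
    refine ⟨fun v w => ?_, ha'.mul_left hb'⟩
    show B (a (b v)) (a (b w)) = B v w
    rw [ha, hb]
  inv_mem' := by
    rintro a ⟨ha, ha'⟩
    refine ⟨fun v w => ?_, ha'.inv_left⟩
    conv_rhs => rw [show v = a (a⁻¹ v) from (a.apply_symm_apply v).symm,
      show w = a (a⁻¹ w) from (a.apply_symm_apply w).symm]
    rw [ha]

open Module DirectSum

/-- **The centralizer of a semisimple isometry in an orthogonal group.**

Let `(V, B)` be a finite-dimensional vector space over a field `K` with a nondegenerate
symmetric bilinear form, and let `g` be an isometry of `(V, B)`.  Suppose there are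
`α₁, …, α_d ∈ Kˣ` such that the `2d` scalars `αᵢ, αᵢ⁻¹` are pairwise distinct and `V`
is the internal direct sum of the corresponding eigenspaces of `g`.  Then the centralizer
of `g` in `O(V, B)` is isomorphic, as a group, to `∏ᵢ GL(E(αᵢ))`. -/
theorem orthogonalCentralizer_iso_pi_GL
    {K V : Type*} [Field K] [AddCommGroup V] [Module K V] [FiniteDimensional K V]
    (B : V →ₗ[K] V →ₗ[K] K)
    (hsymm : ∀ v w : V, B v w = B w v)
    (hnd : ∀ v : V, (∀ w : V, B v w = 0) → v = 0)
    (g : V ≃ₗ[K] V) (hg : ∀ v w : V, B (g v) (g w) = B v w)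
    (d : ℕ) (α : Fin d → Kˣ)
    (hdist : Function.Injective
      (Sum.elim (fun i => (α i : K)) (fun i => (α i : K)⁻¹) : Fin d ⊕ Fin d → K))
    (hdecomp : DirectSum.IsInternal fun s : Fin d ⊕ Fin d =>
      Module.End.eigenspace (g : V →ₗ[K] V)
        (Sum.elim (fun i => (α i : K)) (fun i => (α i : K)⁻¹) s)) :
    Nonempty ((orthogonalCentralizer B g) ≃*
      (∀ i : Fin d,
        (↥(Module.End.eigenspace (g : V →ₗ[K] V) (α i : K)) ≃ₗ[K]
          ↥(Module.End.eigenspace (g : V →ₗ[K] V) (α i : K))))) := by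
    classical
  set lam : Fin d ⊕ Fin d → K := Sum.elim (fun i => (α i : K)) (fun i => (α i : K)⁻¹) with hlamdef
  set E : Fin d ⊕ Fin d → Submodule K V :=
    fun s => Module.End.eigenspace (g : V →ₗ[K] V) (lam s) with hEdef
  have hmem : ∀ (s) (x : V), x ∈ E s ↔ g x = lam s • x := fun s x =>
    Module.End.mem_eigenspace_iff
  have htop : (⨆ s, E s) = ⊤ := hdecomp.submodule_iSup_eq_top
  -- orthogonality
  have horth : ∀ s t, lam s * lam t ≠ 1 → ∀ v ∈ E s, ∀ w ∈ E t, B v w = 0 := by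
    intro s t hst v hv w hw
    have h1 : B v w = (lam s * lam t) * B v w := by
      conv_lhs => rw [← hg v w, (hmem s v).mp hv, (hmem t w).mp hw]
      simp only [map_smul, LinearMap.smul_apply, smul_eq_mul]; ring
    have h2 : (lam s * lam t - 1) * B v w = 0 := by rw [sub_mul, one_mul, ← h1, sub_self]
    rcases mul_eq_zero.mp h2 with h | h
    · exact absurd (sub_eq_zero.mp h) hst
    · exact h
  have hnd' : ∀ v : V, (∀ s, ∀ u ∈ E s, B v u = 0) → v = 0 := by
    intro v hv
    refine hnd v fun w => ?_
    have hw : w ∈ ⨆ s, E s := htop ▸ Submodule.mem_top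
    exact Submodule.iSup_induction E (motive := fun w => B v w = 0) hw (fun s u hu => hv s u hu)
      (map_zero _) (fun x y hx hy => by show B v (x + y) = 0; rw [map_add, hx, hy, add_zero])
  -- which products of eigenvalues are 1
  have hpair : ∀ s t, lam s * lam t = 1 →
      (∃ i, s = Sum.inl i ∧ t = Sum.inr i) ∨ (∃ i, s = Sum.inr i ∧ t = Sum.inl i) := by
    have hα : ∀ i, (α i : K) ≠ 0 := fun i => (α i).ne_zero
    rintro (i | i) (j | j) h <;>
      simp only [hlamdef, Sum.elim_inl, Sum.elim_inr] at h
    · exfalso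
      have : lam (Sum.inl i) = lam (Sum.inr j) := by
        show (α i : K) = (α j : K)⁻¹
        exact eq_inv_of_mul_eq_one_left (by linear_combination h)
      simpa using hdist this
    · left
      have : lam (Sum.inl i) = lam (Sum.inl j) := by
        show (α i : K) = (α j : K)
        have hj := hα j
        have : (α i : K) * (α j : K)⁻¹ = 1 := h
        rwa [mul_inv_eq_one₀ hj] at this
      obtain rfl : i = j := by simpa using hdist this
      exact ⟨_, rfl, rfl⟩
    · right
      have : lam (Sum.inl j) = lam (Sum.inl i) := by
        show (α j : K) = (α i : K)
        have : (α j : K) * (α i : K)⁻¹ = 1 := by rw [mul_comm] at h; exact h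
        rwa [mul_inv_eq_one₀ (hα i)] at this
      obtain rfl : j = i := by simpa using hdist this
      exact ⟨_, rfl, rfl⟩
    · exfalso
      have : lam (Sum.inl i) = lam (Sum.inr j) := by
        show (α i : K) = (α j : K)⁻¹
        have h' : ((α i : K) * (α j : K))⁻¹ = 1 := by
          rw [mul_inv]; exact h
        rw [inv_eq_one] at h'
        exact eq_inv_of_mul_eq_one_left (by linear_combination h')
      simpa using hdist this
  -- elements commuting with g preserve eigenspaces
  have hpres : ∀ (h : V ≃ₗ[K] V), Commute h g → ∀ s, ∀ v ∈ E s, h v ∈ E s := by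
    intro h hc s v hv
    rw [hmem] at hv ⊢
    have hcv : h (g v) = g (h v) := DFunLike.congr_fun hc v
    rw [← hcv, hv, map_smul]
  -- extensionality from the spanning eigenspaces
  have hext : ∀ (φ ψ : V →ₗ[K] V), (∀ s, ∀ v ∈ E s, φ v = ψ v) → φ = ψ := by
    intro φ ψ hφψ
    ext v
    have hv : v ∈ ⨆ s, E s := htop ▸ Submodule.mem_top
    exact Submodule.iSup_induction E (motive := fun v => φ v = ψ v) hv hφψ (by simp)
      (fun x y hx hy => by show φ (x + y) = ψ (x + y); rw [map_add, map_add, hx, hy])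
  -- the direct sum decomposition
  let D : (⨁ s, ↥(E s)) ≃ₗ[K] V := LinearEquiv.ofBijective (DirectSum.coeLinearMap E) hdecomp
  have hD : ∀ s (x : ↥(E s)), D (DirectSum.lof K _ (fun s => ↥(E s)) s x) = (x : V) := by
    intro s x
    exact DirectSum.coeLinearMap_of E s x
  have hDsymm : ∀ s (x : ↥(E s)), D.symm (x : V) = DirectSum.lof K _ (fun s => ↥(E s)) s x := by
    intro s x
    apply D.injective
    rw [D.apply_symm_apply, hD]
  -- building a linear map from a family of block maps
  let mk : (∀ s, ↥(E s) ≃ₗ[K] ↥(E s)) → (V →ₗ[K] V) := fun F =>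
    (DirectSum.toModule K _ V (fun s => (E s).subtype ∘ₗ (F s).toLinearMap)) ∘ₗ
      D.symm.toLinearMap
  have hmk : ∀ F s (x : ↥(E s)), mk F (x : V) = ((F s x : ↥(E s)) : V) := by
    intro F s x
    show DirectSum.toModule K _ V _ (D.symm (x : V)) = _
    rw [hDsymm, DirectSum.toModule_lof]
    rfl
  have hinv : ∀ F : ∀ s, ↥(E s) ≃ₗ[K] ↥(E s),
      (mk F) ∘ₗ (mk fun s => (F s).symm) = LinearMap.id := by
    intro F
    apply hext
    intro s v hv
    show mk F (mk (fun s => (F s).symm) ((⟨v, hv⟩ : ↥(E s)) : V)) =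
      LinearMap.id ((⟨v, hv⟩ : ↥(E s)) : V)
    rw [hmk _ s, hmk F s]
    simp
  let mkE : (∀ s, ↥(E s) ≃ₗ[K] ↥(E s)) → (V ≃ₗ[K] V) := fun F =>
    LinearEquiv.ofLinear (mk F) (mk fun s => (F s).symm) (hinv F)
      (by simpa using hinv (fun s => (F s).symm))
  have hmkE : ∀ F s (x : ↥(E s)), mkE F (x : V) = ((F s x : ↥(E s)) : V) := fun F => hmk F
  have hcomm : ∀ F, Commute (mkE F) g := by
    intro F
    have hLM : ((mkE F : V ≃ₗ[K] V) : V →ₗ[K] V) ∘ₗ (g : V →ₗ[K] V) =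
        ((g : V ≃ₗ[K] V) : V →ₗ[K] V) ∘ₗ ((mkE F : V ≃ₗ[K] V) : V →ₗ[K] V) := by
      apply hext
      intro s v hv
      have hgv : g v ∈ E s := by
        rw [hmem] at hv ⊢
        rw [hv, map_smul, hv]
      rw [LinearMap.comp_apply, LinearMap.comp_apply]
      show mkE F (g v) = g (mkE F v)
      have h1 : (⟨g v, hgv⟩ : ↥(E s)) = lam s • (⟨v, hv⟩ : ↥(E s)) :=
        Subtype.ext ((hmem s v).mp hv)
      rw [show g v = ((⟨g v, hgv⟩ : ↥(E s)) : V) from rfl, hmkE F s, h1, map_smul]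
      conv_rhs => rw [show v = ((⟨v, hv⟩ : ↥(E s)) : V) from rfl, hmkE F s]
      rw [(hmem s _).mp (F s ⟨v, hv⟩).2]
      simp
    refine LinearEquiv.ext fun v => ?_
    exact DFunLike.congr_fun hLM v
  -- injectivity of the pairing maps
  have hinjP : ∀ s t : Fin d ⊕ Fin d, (∀ u, u ≠ t → lam s * lam u ≠ 1) →
      Function.Injective ((B.domRestrict (E s)).compl₂ (E t).subtype) := by
    intro s t hst
    rw [injective_iff_map_eq_zero]
    intro x hx
    have hx0 : (x : V) = 0 := by
      refine hnd' x fun u w hw => ?_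
      by_cases hu : u = t
      · subst hu
        have := DFunLike.congr_fun hx ⟨w, hw⟩
        simpa using this
      · exact horth s u (hst u hu) x x.2 w hw
    exact Subtype.ext hx0
  have hside1 : ∀ i : Fin d, ∀ u, u ≠ Sum.inl i → lam (Sum.inr i) * lam u ≠ 1 := by
    intro i u hu h
    rcases hpair _ _ h with ⟨j, hj1, hj2⟩ | ⟨j, hj1, hj2⟩
    · exact absurd hj1 (by simp)
    · obtain rfl : i = j := by injection hj1
      exact hu hj2
  have hside2 : ∀ i : Fin d, ∀ u, u ≠ Sum.inr i → lam (Sum.inl i) * lam u ≠ 1 := by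
    intro i u hu h
    rcases hpair _ _ h with ⟨j, hj1, hj2⟩ | ⟨j, hj1, hj2⟩
    · obtain rfl : i = j := by injection hj1
      exact hu hj2
    · exact absurd hj1 (by simp)
  have hP1 : ∀ i : Fin d,
      Function.Injective ((B.domRestrict (E (Sum.inr i))).compl₂ (E (Sum.inl i)).subtype) :=
    fun i => hinjP _ _ (hside1 i)
  have hP2 : ∀ i : Fin d,
      Function.Injective ((B.domRestrict (E (Sum.inl i))).compl₂ (E (Sum.inr i)).subtype) :=
    fun i => hinjP _ _ (hside2 i)
  have hrank : ∀ i : Fin d,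
      finrank K ↥(E (Sum.inr i)) = finrank K (Module.Dual K ↥(E (Sum.inl i))) := by
    intro i
    have e1 := LinearMap.finrank_le_finrank_of_injective (hP1 i)
    have e2 := LinearMap.finrank_le_finrank_of_injective (hP2 i)
    rw [Subspace.dual_finrank_eq] at e1 e2
    rw [Subspace.dual_finrank_eq]
    exact le_antisymm e1 e2
  let P : ∀ i : Fin d, ↥(E (Sum.inr i)) ≃ₗ[K] Module.Dual K ↥(E (Sum.inl i)) := fun i =>
    LinearMap.linearEquivOfInjective _ (hP1 i) (hrank i)
  have hPapp : ∀ i (x : ↥(E (Sum.inr i))) (v : ↥(E (Sum.inl i))),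
      P i x v = B (x : V) (v : V) := by
    intro i x v
    simp [P, LinearMap.linearEquivOfInjective_apply]
  -- the dual-inverse block on the inverse eigenvalue
  let f' : (∀ i : Fin d, ↥(E (Sum.inl i)) ≃ₗ[K] ↥(E (Sum.inl i))) →
      ∀ i : Fin d, ↥(E (Sum.inr i)) ≃ₗ[K] ↥(E (Sum.inr i)) :=
    fun f i => ((P i).trans (f i).symm.dualMap).trans (P i).symm
  have hf' : ∀ f i (x : ↥(E (Sum.inr i))) (v : ↥(E (Sum.inl i))),
      B ((f' f i x : ↥(E (Sum.inr i))) : V) (v : V) =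
        B (x : V) (((f i).symm v : ↥(E (Sum.inl i))) : V) := by
    intro f i x v
    have h1 : P i (f' f i x) = (f i).symm.dualMap (P i x) := by
      simp [f']
    have h2 := DFunLike.congr_fun h1 v
    rw [hPapp] at h2
    rw [h2, LinearEquiv.dualMap_apply, hPapp]
  -- the combined block map
  let Ff : (∀ i : Fin d, ↥(E (Sum.inl i)) ≃ₗ[K] ↥(E (Sum.inl i))) →
      ∀ s, ↥(E s) ≃ₗ[K] ↥(E s) :=
    fun f s => Sum.rec (fun i => f i) (fun i => f' f i) s
  have hFl : ∀ f (i : Fin d), Ff f (Sum.inl i) = f i := fun f i => rfl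
  have hFr : ∀ f (i : Fin d), Ff f (Sum.inr i) = f' f i := fun f i => rfl
  -- the extension is an isometry
  have hiso : ∀ (f : ∀ i : Fin d, ↥(E (Sum.inl i)) ≃ₗ[K] ↥(E (Sum.inl i))) (v w : V),
      B (mkE (Ff f) v) (mkE (Ff f) w) = B v w := by
    intro f v w
    have hv : v ∈ ⨆ s, E s := htop ▸ Submodule.mem_top
    refine Submodule.iSup_induction E
      (motive := fun v => ∀ w, B (mkE (Ff f) v) (mkE (Ff f) w) = B v w) hv ?_ ?_ ?_ w
    · intro s v hv w
      have hw : w ∈ ⨆ t, E t := htop ▸ Submodule.mem_top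
      refine Submodule.iSup_induction E
        (motive := fun w => B (mkE (Ff f) v) (mkE (Ff f) w) = B v w) hw ?_ (by simp) ?_
      · intro t w hw'
        rw [show v = ((⟨v, hv⟩ : ↥(E s)) : V) from rfl,
          show w = ((⟨w, hw'⟩ : ↥(E t)) : V) from rfl, hmkE, hmkE]
        by_cases h1t : lam s * lam t = 1
        · rcases hpair s t h1t with ⟨i, rfl, rfl⟩ | ⟨i, rfl, rfl⟩
          · rw [hFl, hFr, hsymm, hf' f i ⟨w, hw'⟩ ((f i) ⟨v, hv⟩),
              LinearEquiv.symm_apply_apply]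
            exact hsymm _ _
          · rw [hFr, hFl, hf' f i ⟨v, hv⟩ ((f i) ⟨w, hw'⟩),
              LinearEquiv.symm_apply_apply]
        · rw [horth s t h1t _ (Ff f s ⟨v, hv⟩).2 _ (Ff f t ⟨w, hw'⟩).2,
            horth s t h1t _ hv _ hw']
      · intro x y hx hy
        show B (mkE (Ff f) v) (mkE (Ff f) (x + y)) = B v (x + y)
        simp only [map_add, LinearMap.add_apply, hx, hy]
    · intro w
      simp
    · intro x y hx hy w
      show B (mkE (Ff f) (x + y)) (mkE (Ff f) w) = B (x + y) w
      simp only [map_add, LinearMap.add_apply, hx, hy]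
  -- the restriction of a centralizer element to an eigenspace
  have hres : ∀ (h : V ≃ₗ[K] V), Commute h g → ∀ s,
      ∃ e : ↥(E s) ≃ₗ[K] ↥(E s), ∀ x : ↥(E s), (e x : V) = h (x : V) := by
    intro h hc s
    have hc' : Commute h.symm g := hc.inv_left
    refine ⟨LinearEquiv.ofLinear
      (((h : V ≃ₗ[K] V) : V →ₗ[K] V).restrict (hpres h hc s))
      ((h.symm : V →ₗ[K] V).restrict (hpres h.symm hc' s)) ?_ ?_, fun x => rfl⟩
    · refine LinearMap.ext fun x => Subtype.ext ?_
      simp [LinearMap.restrict_apply]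
    · refine LinearMap.ext fun x => Subtype.ext ?_
      simp [LinearMap.restrict_apply]
  choose res hres0 using hres
  have hmemC : ∀ h : orthogonalCentralizer B g,
      (∀ v w : V, B ((h : V ≃ₗ[K] V) v) ((h : V ≃ₗ[K] V) w) = B v w) ∧
        Commute (h : V ≃ₗ[K] V) g := fun h => h.2
  -- the restriction homomorphism
  have hΦmul : ∀ a b : orthogonalCentralizer B g,
      (fun h : orthogonalCentralizer B g => fun i : Fin d =>
        res (h : V ≃ₗ[K] V) (hmemC h).2 (Sum.inl i)) (a * b) =
      (fun h : orthogonalCentralizer B g => fun i : Fin d =>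
        res (h : V ≃ₗ[K] V) (hmemC h).2 (Sum.inl i)) a *
      (fun h : orthogonalCentralizer B g => fun i : Fin d =>
        res (h : V ≃ₗ[K] V) (hmemC h).2 (Sum.inl i)) b := by
    intro a b
    funext i
    refine LinearEquiv.ext fun x => Subtype.ext ?_
    calc ((res (↑(a * b) : V ≃ₗ[K] V) (hmemC (a * b)).2 (Sum.inl i) x : ↥(E (Sum.inl i))) : V)
        = (↑(a * b) : V ≃ₗ[K] V) (x : V) := hres0 _ _ _ _
      _ = (↑a : V ≃ₗ[K] V) ((↑b : V ≃ₗ[K] V) (x : V)) := rfl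
      _ = (↑a : V ≃ₗ[K] V) ((res (↑b : V ≃ₗ[K] V) (hmemC b).2 (Sum.inl i) x : V)) := by
          rw [hres0]
      _ = ((res (↑a : V ≃ₗ[K] V) (hmemC a).2 (Sum.inl i)
            (res (↑b : V ≃ₗ[K] V) (hmemC b).2 (Sum.inl i) x) : ↥(E (Sum.inl i))) : V) :=
          (hres0 _ _ _ _).symm
  let Φ : (orthogonalCentralizer B g) →*
      (∀ i : Fin d, ↥(E (Sum.inl i)) ≃ₗ[K] ↥(E (Sum.inl i))) :=
    MonoidHom.mk' (fun h => fun i => res (h : V ≃ₗ[K] V) (hmemC h).2 (Sum.inl i)) hΦmul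
  have hΦinj : Function.Injective Φ := by
    refine (injective_iff_map_eq_one Φ).mpr ?_
    intro h hh
    have hfix : ∀ i : Fin d, ∀ u ∈ E (Sum.inl i), (h : V ≃ₗ[K] V) u = u := by
      intro i u hu
      have h1 := congrFun hh i
      have h2 := DFunLike.congr_fun h1 (⟨u, hu⟩ : ↥(E (Sum.inl i)))
      have h3 := congrArg Subtype.val h2
      exact (hres0 (↑h : V ≃ₗ[K] V) (hmemC h).2 (Sum.inl i) ⟨u, hu⟩).symm.trans h3
    have hid : ∀ v : V, (h : V ≃ₗ[K] V) v = v := by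
      intro v
      have hLM : ((h : V ≃ₗ[K] V) : V →ₗ[K] V) = LinearMap.id := by
        apply hext
        rintro (i | i) v hv
        · exact hfix i v hv
        · have hsub : (h : V ≃ₗ[K] V) v - v = 0 := by
            refine hnd' _ fun t u hu => ?_
            rw [map_sub, LinearMap.sub_apply]
            by_cases ht : t = Sum.inl i
            · subst ht
              have : (B ((h : V ≃ₗ[K] V) v)) u =
                  (B ((h : V ≃ₗ[K] V) v)) ((h : V ≃ₗ[K] V) u) := by
                rw [hfix i u hu]
              rw [this, (hmemC h).1, sub_self]
            · rw [horth _ t (hside1 i t ht) _ (hpres _ (hmemC h).2 _ v hv) u hu,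
                horth _ t (hside1 i t ht) _ hv u hu, sub_self]
          exact sub_eq_zero.mp hsub
      exact DFunLike.congr_fun hLM v
    exact Subtype.ext (LinearEquiv.ext hid)
  have hΦsurj : Function.Surjective Φ := by
    intro f
    have hFmem : mkE (Ff f) ∈ orthogonalCentralizer B g :=
      (⟨hiso f, hcomm (Ff f)⟩ :
        (∀ v w : V, B (mkE (Ff f) v) (mkE (Ff f) w) = B v w) ∧ Commute (mkE (Ff f)) g)
    refine ⟨⟨mkE (Ff f), hFmem⟩, ?_⟩
    funext i
    refine LinearEquiv.ext fun x => Subtype.ext ?_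
    exact (hres0 _ _ _ x).trans (hmkE (Ff f) (Sum.inl i) x)
  exact ⟨MulEquiv.ofBijective Φ ⟨hΦinj, hΦsurj⟩⟩
end
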